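/- Let (X,d) be a metric space with a Hausdorff topology σ such that d-bounded sets are sequentially σ-compact and d is σ-sequentially lower semicontinuous. Let γⁿ : [0,1] → X be curves with common endpoints x, y and uniformly bounded kinetic action A(γⁿ) ≤ C. Then there exist a subsequence and a 1/2-Hölder continuous curve γ : [0,1] → X with γ₀ = x, γ₁ = y such that γⁿ_t → γ_t in σ for every t ∈ [0,1], and A(γ) ≤ liminf A(γⁿ). -/

import Mathlib

open scoped ENNReal
open Filter

/-- The kinetic action (2-energy) of a curve `γ : [0,1] → X`, defined as the supremum
over partitions of `(1/2) Σ d(γ(t_{i+1}), γ(t_i))² / (t_{i+1} − t_i)`; for absolutely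
continuous curves it coincides with `(1/2)∫₀¹ |γ̇_t|² dt`. -/
noncomputable def kineticAction {X : Type*} [MetricSpace X] (γ : ℝ → X) : ℝ≥0∞ :=
  ⨆ (n : ℕ) (t : Fin (n + 1) → ℝ) (_ : Monotone t) (_ : ∀ i, t i ∈ Set.Icc (0:ℝ) 1),
    ENNReal.ofReal ((1 / 2) * ∑ i : Fin n,
      dist (γ (t i.succ)) (γ (t i.castSucc)) ^ 2 / (t i.succ - t i.castSucc))

private lemma lim_le {u : ℕ → ℝ} {a : ℝ} (h0 : ∀ n, 0 ≤ u n) (h : ∀ n, u n ≤ a) :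
    Filter.liminf u Filter.atTop ≤ a :=
  Filter.liminf_le_of_frequently_le (Filter.Frequently.of_forall h)
    (Filter.isBoundedUnder_of ⟨0, fun n => h0 n⟩)

private lemma action_holder {X : Type*} [MetricSpace X] {γ : ℝ → X} {C : ℝ} (hC : 0 ≤ C)
    (h : kineticAction γ ≤ ENNReal.ofReal C) :
    ∀ s ∈ Set.Icc (0:ℝ) 1, ∀ t ∈ Set.Icc (0:ℝ) 1,
      dist (γ s) (γ t) ≤ Real.sqrt (2 * C) * Real.sqrt |s - t| := by
  have main : ∀ s ∈ Set.Icc (0:ℝ) 1, ∀ t ∈ Set.Icc (0:ℝ) 1, s ≤ t →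
      dist (γ t) (γ s) ≤ Real.sqrt (2 * C) * Real.sqrt (t - s) := by
    intro s hs t ht hst
    rcases eq_or_lt_of_le hst with rfl | hlt
    · simpa using mul_nonneg (Real.sqrt_nonneg _) (Real.sqrt_nonneg _)
    have key : ENNReal.ofReal ((1/2 : ℝ) * (dist (γ t) (γ s) ^ 2 / (t - s))) ≤
        ENNReal.ofReal C := by
      refine le_trans ?_ h
      unfold kineticAction
      refine le_iSup_of_le 1 (le_iSup_of_le ![s, t] ?_)
      have hmono : Monotone (![s, t] : Fin 2 → ℝ) := by
        intro a b hab
        fin_cases a <;> fin_cases b <;>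
          simp_all [Matrix.cons_val_zero, Matrix.cons_val_one, Matrix.head_cons] <;>
          first | rfl | exact hst | exact absurd hab (by decide)
      refine le_iSup_of_le hmono ?_
      have hmem : ∀ i : Fin 2, (![s, t] : Fin 2 → ℝ) i ∈ Set.Icc (0:ℝ) 1 := by
        intro i; fin_cases i <;> simpa
      refine le_iSup_of_le hmem (le_of_eq ?_)
      congr 1
      rw [Fin.sum_univ_one]
      norm_num [Matrix.cons_val_zero, Matrix.cons_val_one, Matrix.head_cons]
    have hreal : (1/2 : ℝ) * (dist (γ t) (γ s) ^ 2 / (t - s)) ≤ C :=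
      (ENNReal.ofReal_le_ofReal_iff hC).1 key
    have hts : (0:ℝ) < t - s := sub_pos.2 hlt
    have hsq : dist (γ t) (γ s) ^ 2 ≤ 2 * C * (t - s) := by
      have h2 : dist (γ t) (γ s) ^ 2 / (t - s) ≤ 2 * C := by linarith
      rw [div_le_iff₀ hts] at h2
      linarith
    have : dist (γ t) (γ s) ≤ Real.sqrt (2 * C * (t - s)) := by
      have h1 : dist (γ t) (γ s) = Real.sqrt (dist (γ t) (γ s) ^ 2) :=
        (Real.sqrt_sq dist_nonneg).symm
      rw [h1]
      exact Real.sqrt_le_sqrt hsq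
    rwa [Real.sqrt_mul (by linarith : (0:ℝ) ≤ 2 * C)] at this
  intro s hs t ht
  rcases le_total s t with hst | hts
  · rw [dist_comm, abs_sub_comm, abs_of_nonneg (sub_nonneg.2 hst)]
    exact main s hs t ht hst
  · rw [abs_of_nonneg (sub_nonneg.2 hts)]
    exact main t ht s hs hts

private lemma diag_subseq {Y : Type*} [TopologicalSpace Y] (v : ℕ → ℕ → Y)
    (h : ∀ (j : ℕ) (f : ℕ → ℕ), StrictMono f →
      ∃ g : ℕ → ℕ, StrictMono g ∧ ∃ z : Y,
        Filter.Tendsto (fun n => v j (f (g n))) Filter.atTop (nhds z)) :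
    ∃ φ : ℕ → ℕ, StrictMono φ ∧
      ∀ j, ∃ z : Y, Filter.Tendsto (fun n => v j (φ n)) Filter.atTop (nhds z) := by
  have step : ∀ (k : ℕ) (g : ℕ → ℕ), StrictMono g →
      ∃ g' : ℕ → ℕ, StrictMono g' ∧ (∃ ψ : ℕ → ℕ, StrictMono ψ ∧ g' = g ∘ ψ) ∧
        ∃ z, Filter.Tendsto (fun n => v k (g' n)) Filter.atTop (nhds z) := by
    intro k g hg
    obtain ⟨ψ, hψ, z, hz⟩ := h k g hg
    exact ⟨g ∘ ψ, hg.comp hψ, ⟨ψ, hψ, rfl⟩, z, hz⟩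
  choose F hF1 hF2 hF3 using step
  let G : ℕ → {g : ℕ → ℕ // StrictMono g} := fun k =>
    Nat.rec ⟨F 0 id strictMono_id, hF1 0 id strictMono_id⟩
      (fun k ih => ⟨F (k+1) ih.1 ih.2, hF1 (k+1) ih.1 ih.2⟩) k
  have hGsucc : ∀ k : ℕ, (G (k+1)).1 = F (k+1) (G k).1 (G k).2 := fun k => rfl
  have hGconv : ∀ k, ∃ z, Filter.Tendsto (fun n => v k ((G k).1 n)) Filter.atTop (nhds z) := by
    intro k
    cases k with
    | zero => exact hF3 0 id strictMono_id
    | succ k => rw [hGsucc k]; exact hF3 (k+1) (G k).1 (G k).2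
  have hGrel : ∀ k, ∃ ψ : ℕ → ℕ, StrictMono ψ ∧ (G (k+1)).1 = (G k).1 ∘ ψ := by
    intro k; rw [hGsucc k]; exact hF2 (k+1) (G k).1 (G k).2
  choose ψs hψs hψeq using hGrel
  have hge : ∀ j k, j ≤ k → ∀ n, ∃ m, n ≤ m ∧ (G k).1 n = (G j).1 m := by
    intro j k hjk
    induction k, hjk using Nat.le_induction with
    | base => exact fun n => ⟨n, le_rfl, rfl⟩
    | succ k hjk ih =>
      intro n
      obtain ⟨m, hm, heq⟩ := ih (ψs k n)
      refine ⟨m, le_trans ((hψs k).le_apply) hm, ?_⟩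
      rw [hψeq k]; exact heq
  refine ⟨fun k => (G k).1 k, ?_, ?_⟩
  · apply strictMono_nat_of_lt_succ
    intro k
    have : (G (k+1)).1 (k+1) = (G k).1 (ψs k (k+1)) := by rw [hψeq k]; rfl
    rw [this]
    exact (G k).2 (lt_of_lt_of_le (Nat.lt_succ_self k) (hψs k).le_apply)
  · intro j
    obtain ⟨z, hz⟩ := hGconv j
    refine ⟨z, ?_⟩
    rw [tendsto_atTop'] at hz ⊢
    intro s hs
    obtain ⟨N, hN⟩ := hz s hs
    refine ⟨max j N, fun k hk => ?_⟩
    obtain ⟨m, hm, heq⟩ := hge j k (le_trans (le_max_left j N) hk) k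
    have : v j ((G k).1 k) = v j ((G j).1 m) := by rw [heq]
    rw [this]
    exact hN m (le_trans (le_trans (le_max_right j N) hk) hm)

private lemma sum_liminf_aux {n : ℕ} (Δ : Fin n → ℝ) (hΔ0 : ∀ i, 0 ≤ Δ i)
    (dg : Fin n → ℝ) (dk : ℕ → Fin n → ℝ) (K : ℝ) (hK0 : 0 ≤ K)
    (hdg0 : ∀ i, 0 ≤ dg i) (hdgK : ∀ i, dg i ≤ K) (hdk0 : ∀ k i, 0 ≤ dk k i)
    (hdgle : ∀ i, dg i ≤ Filter.liminf (fun k => dk k i) Filter.atTop) (L : ℝ)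
    (hbdd : ∀ k, (1/2:ℝ) * ∑ i, dk k i ^ 2 / Δ i ≤ L) :
    (1/2:ℝ) * ∑ i, dg i ^ 2 / Δ i ≤
      Filter.liminf (fun k => (1/2:ℝ) * ∑ i, dk k i ^ 2 / Δ i) Filter.atTop := by
  refine le_of_forall_sub_le fun δ hδ => ?_
  set q : Fin n → ℝ := fun i => if 0 < Δ i then K / Δ i else 0 with hq
  have hq0 : ∀ i, 0 ≤ q i := by
    intro i; rw [hq]; dsimp only
    split
    · exact div_nonneg hK0 (hΔ0 i)
    · exact le_rfl
  set Q : ℝ := ∑ i, q i with hQ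
  have hQ0 : 0 ≤ Q := Finset.sum_nonneg fun i _ => hq0 i
  set ε : ℝ := δ / (Q + 1) with hε
  have hεpos : 0 < ε := by rw [hε]; positivity
  have hev : ∀ᶠ k in Filter.atTop, ∀ i, dg i - ε < dk k i := by
    rw [Filter.eventually_all]
    intro i
    exact Filter.eventually_lt_of_lt_liminf
      (lt_of_lt_of_le (by linarith) (hdgle i))
      (Filter.isBoundedUnder_of ⟨0, fun k => hdk0 k i⟩)
  have hεQ : ε * (Q + 1) = δ := by rw [hε]; field_simp
  have hTS : ∀ᶠ k in Filter.atTop,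
      (1/2:ℝ) * ∑ i, dg i ^ 2 / Δ i - δ ≤ (1/2:ℝ) * ∑ i, dk k i ^ 2 / Δ i := by
    refine hev.mono fun k hk => ?_
    have hterm : ∀ i, dg i ^ 2 / Δ i ≤ dk k i ^ 2 / Δ i + 2 * ε * q i := by
      intro i
      rcases lt_or_ge 0 (Δ i) with hΔpos | hΔle
      · have hqi : q i = K / Δ i := by rw [hq]; dsimp only; rw [if_pos hΔpos]
        have hkey : dg i ^ 2 ≤ dk k i ^ 2 + 2 * ε * K := by
          rcases le_or_gt (dg i) ε with hle | hlt
          · nlinarith [mul_le_mul hle (hdgK i) (hdg0 i) hεpos.le, sq_nonneg (dk k i),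
              hdk0 k i]
          · have h1 : dg i - ε ≤ dk k i := (hk i).le
            nlinarith [mul_le_mul h1 h1 (by linarith) (hdk0 k i),
              mul_le_mul_of_nonneg_left (hdgK i) hεpos.le]
        have h2 : dg i ^ 2 / Δ i ≤ (dk k i ^ 2 + 2 * ε * K) / Δ i :=
          div_le_div_of_nonneg_right hkey (hΔ0 i)
        rw [hqi]
        rw [add_div] at h2
        rw [← mul_div_assoc]
        linarith
      · have hΔz : Δ i = 0 := le_antisymm hΔle (hΔ0 i)
        rw [hΔz, div_zero, div_zero]
        have : 0 ≤ 2 * ε * q i := mul_nonneg (by positivity) (hq0 i)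
        linarith
    have hsum : ∑ i, dg i ^ 2 / Δ i ≤ ∑ i, (dk k i ^ 2 / Δ i + 2 * ε * q i) :=
      Finset.sum_le_sum fun i _ => hterm i
    have hexp : ∑ i, (dk k i ^ 2 / Δ i + 2 * ε * q i)
        = (∑ i, dk k i ^ 2 / Δ i) + 2 * ε * Q := by
      rw [Finset.sum_add_distrib, ← Finset.mul_sum]
    rw [hexp] at hsum
    nlinarith [hεpos]
  have hco : Filter.IsCoboundedUnder (· ≥ ·) Filter.atTop
      (fun k => (1/2:ℝ) * ∑ i, dk k i ^ 2 / Δ i) :=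
    Filter.IsBoundedUnder.isCoboundedUnder_ge (Filter.isBoundedUnder_of ⟨L, hbdd⟩)
  exact (Filter.le_liminf_of_le hco hTS).trans' (by linarith)

/-- compactness and lower semicontinuity. Curves with common endpoints
and uniformly bounded kinetic action admit a subsequence converging pointwise in the
`σ`-topology to a `1/2`-Hölder curve with the same endpoints, along which the action
is lower semicontinuous. -/
theorem stmt15 {X : Type*} [MetricSpace X] (σ : TopologicalSpace X)
    (hH : @T2Space X σ)
    (hcpt : ∀ u : ℕ → X, Bornology.IsBounded (Set.range u) →
      ∃ φ : ℕ → ℕ, StrictMono φ ∧ ∃ z : X,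
        Filter.Tendsto (u ∘ φ) Filter.atTop (@nhds X σ z))
    (hdlsc : ∀ (u v : ℕ → X) (a b : X),
      Filter.Tendsto u Filter.atTop (@nhds X σ a) →
      Filter.Tendsto v Filter.atTop (@nhds X σ b) →
      dist a b ≤ Filter.liminf (fun n => dist (u n) (v n)) Filter.atTop)
    (γ : ℕ → ℝ → X) (x y : X) (C : ℝ) (hC : 0 ≤ C)
    (hends : ∀ n, γ n 0 = x ∧ γ n 1 = y)
    (hact : ∀ n, kineticAction (γ n) ≤ ENNReal.ofReal C) :
    ∃ (φ : ℕ → ℕ) (g : ℝ → X), StrictMono φ ∧ g 0 = x ∧ g 1 = y ∧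
      (∀ s ∈ Set.Icc (0:ℝ) 1, ∀ t ∈ Set.Icc (0:ℝ) 1,
        dist (g s) (g t) ≤ Real.sqrt (2 * C) * Real.sqrt |s - t|) ∧
      (∀ t ∈ Set.Icc (0:ℝ) 1,
        Filter.Tendsto (fun k => γ (φ k) t) Filter.atTop (@nhds X σ (g t))) ∧
      kineticAction g ≤ Filter.liminf (fun k => kineticAction (γ (φ k))) Filter.atTop := by
  classical
  set K := Real.sqrt (2 * C) with hK
  have hK0 : 0 ≤ K := Real.sqrt_nonneg _
  have hold : ∀ n, ∀ s ∈ Set.Icc (0:ℝ) 1, ∀ t ∈ Set.Icc (0:ℝ) 1,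
      dist (γ n s) (γ n t) ≤ K * Real.sqrt |s - t| :=
    fun n => action_holder hC (hact n)
  have h0m : (0:ℝ) ∈ Set.Icc (0:ℝ) 1 := by norm_num
  have h1m : (1:ℝ) ∈ Set.Icc (0:ℝ) 1 := by norm_num
  have hball : ∀ n, ∀ t ∈ Set.Icc (0:ℝ) 1, γ n t ∈ Metric.closedBall x K := by
    intro n t ht
    rw [Metric.mem_closedBall]
    have h1 := hold n t ht 0 h0m
    rw [(hends n).1] at h1
    refine h1.trans ?_
    have : Real.sqrt |t - 0| ≤ 1 := by
      rw [sub_zero, abs_of_nonneg ht.1]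
      exact Real.sqrt_le_one.mpr ht.2
    nlinarith [hK0]
  have key : ∀ v : ℕ → X, (∀ k, v k ∈ Metric.closedBall x K) →
      ∃ φ : ℕ → ℕ, StrictMono φ ∧ ∃ z : X,
        Filter.Tendsto (v ∘ φ) Filter.atTop (@nhds X σ z) := by
    intro v hv
    exact hcpt v ((Metric.isBounded_closedBall).subset (by rintro _ ⟨k, rfl⟩; exact hv k))
  -- countable dense set of rationals in [0,1]
  obtain ⟨e, he⟩ : ∃ e : ℕ → ℝ,
      Set.Icc (0:ℝ) 1 ∩ Set.range (fun q : ℚ => (q:ℝ)) = Set.range e := by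
    refine Set.Countable.exists_eq_range
      ((Set.countable_range _).mono Set.inter_subset_right) ⟨0, h0m, 0, by norm_num⟩
  have hmemD : ∀ j, e j ∈ Set.Icc (0:ℝ) 1 := by
    intro j
    have : e j ∈ Set.range e := ⟨j, rfl⟩
    rw [← he] at this
    exact this.1
  have hdense : ∀ t ∈ Set.Icc (0:ℝ) 1, ∀ ε : ℝ, 0 < ε → ∃ j : ℕ, |t - e j| < ε := by
    intro t ht ε hε
    rcases eq_or_lt_of_le ht.2 with h1 | h1
    · have : (1:ℝ) ∈ Set.range e := by
        rw [← he]; exact ⟨h1m, 1, by norm_num⟩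
      obtain ⟨j, hj⟩ := this
      exact ⟨j, by rw [hj, h1]; simpa⟩
    · obtain ⟨q, hq1, hq2⟩ := exists_rat_btwn (lt_min h1 (lt_add_of_pos_right t hε))
      rw [lt_min_iff] at hq2
      have : (q:ℝ) ∈ Set.range e := by
        rw [← he]
        exact ⟨⟨le_trans ht.1 hq1.le, hq2.1.le⟩, q, rfl⟩
      obtain ⟨j, hj⟩ := this
      refine ⟨j, ?_⟩
      rw [← hj] at hq1 hq2
      rw [abs_sub_lt_iff]
      constructor <;> [linarith [hq2.2]; linarith [hq2.2]]
  -- diagonal extraction along rationals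
  obtain ⟨φ, hφ, hconvD⟩ := @diag_subseq X σ (fun j n => γ n (e j)) (by
    intro j f hf
    obtain ⟨g, hg, z, hz⟩ := key (fun n => γ (f n) (e j)) (fun n => hball (f n) _ (hmemD j))
    exact ⟨g, hg, z, hz⟩)
  choose zD hzD using hconvD
  -- uniqueness of subsequential limits at any time t
  have uniq : ∀ t ∈ Set.Icc (0:ℝ) 1, ∀ ρ₁ ρ₂ : ℕ → ℕ, ∀ w₁ w₂ : X,
      StrictMono ρ₁ → StrictMono ρ₂ →
      Filter.Tendsto (fun k => γ (φ (ρ₁ k)) t) Filter.atTop (@nhds X σ w₁) →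
      Filter.Tendsto (fun k => γ (φ (ρ₂ k)) t) Filter.atTop (@nhds X σ w₂) → w₁ = w₂ := by
    intro t ht ρ₁ ρ₂ w₁ w₂ hρ₁ hρ₂ h₁ h₂
    have est : ∀ (ρ : ℕ → ℕ) (w : X), StrictMono ρ →
        Filter.Tendsto (fun k => γ (φ (ρ k)) t) Filter.atTop (@nhds X σ w) →
        ∀ j, dist w (zD j) ≤ K * Real.sqrt |t - e j| := by
      intro ρ w hρ hw j
      have hz : Filter.Tendsto (fun k => γ (φ (ρ k)) (e j)) Filter.atTop (@nhds X σ (zD j)) :=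
        (hzD j).comp hρ.tendsto_atTop
      refine (hdlsc _ _ _ _ hw hz).trans (lim_le (fun k => dist_nonneg) fun k => ?_)
      exact hold (φ (ρ k)) t ht (e j) (hmemD j)
    have hd : ∀ ε : ℝ, 0 < ε → dist w₁ w₂ ≤ 2 * K * Real.sqrt ε := by
      intro ε hε
      obtain ⟨j, hj⟩ := hdense t ht ε hε
      have hsq : Real.sqrt |t - e j| ≤ Real.sqrt ε := Real.sqrt_le_sqrt hj.le
      have l1 := (est ρ₁ w₁ hρ₁ h₁ j).trans (mul_le_mul_of_nonneg_left hsq hK0)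
      have l2 := (est ρ₂ w₂ hρ₂ h₂ j).trans (mul_le_mul_of_nonneg_left hsq hK0)
      calc dist w₁ w₂ ≤ dist w₁ (zD j) + dist w₂ (zD j) := dist_triangle_right _ _ _
        _ ≤ K * Real.sqrt ε + K * Real.sqrt ε := add_le_add l1 l2
        _ = 2 * K * Real.sqrt ε := by ring
    have hzero : dist w₁ w₂ ≤ 0 := by
      by_contra hpos
      push_neg at hpos
      have h2 := hd ((dist w₁ w₂ / (2*K+2))^2) (by positivity)
      rw [Real.sqrt_sq (by positivity)] at h2
      have hKK : (0:ℝ) < 2*K+2 := by linarith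
      rw [← mul_div_assoc] at h2
      rw [le_div_iff₀ hKK] at h2
      nlinarith
    exact eq_of_dist_eq_zero (le_antisymm hzero dist_nonneg)
  -- convergence of the full subsequence at every t
  have conv : ∀ t, t ∈ Set.Icc (0:ℝ) 1 →
      ∃ z, Filter.Tendsto (fun k => γ (φ k) t) Filter.atTop (@nhds X σ z) := by
    intro t ht
    obtain ⟨ρ, hρ, w, hw⟩ := key (fun k => γ (φ k) t) (fun k => hball (φ k) t ht)
    refine ⟨w, ?_⟩
    by_contra hcon
    rw [Filter.tendsto_def] at hcon
    push_neg at hcon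
    obtain ⟨U, hU, hUn⟩ := hcon
    have hfreq : ∃ᶠ k in Filter.atTop, γ (φ k) t ∉ U :=
      Filter.not_eventually.mp hUn
    obtain ⟨ρ₂, hρ₂, hρ₂U⟩ := Filter.extraction_of_frequently_atTop hfreq
    obtain ⟨ρ₃, hρ₃, w₂, hw₂⟩ := key (fun k => γ (φ (ρ₂ k)) t) (fun k => hball _ t ht)
    have hw₂' : Filter.Tendsto (fun k => γ (φ ((ρ₂ ∘ ρ₃) k)) t) Filter.atTop (@nhds X σ w₂) := hw₂
    have heq : w₂ = w := uniq t ht (ρ₂ ∘ ρ₃) ρ w₂ w (hρ₂.comp hρ₃) hρ hw₂' hw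
    rw [heq] at hw₂'
    obtain ⟨k, hk⟩ := (hw₂'.eventually_mem hU).exists
    exact hρ₂U (ρ₃ k) hk
  -- the limit curve
  let g : ℝ → X := fun t => if ht : t ∈ Set.Icc (0:ℝ) 1 then Classical.choose (conv t ht) else x
  have hg : ∀ t, ∀ _ : t ∈ Set.Icc (0:ℝ) 1,
      Filter.Tendsto (fun k => γ (φ k) t) Filter.atTop (@nhds X σ (g t)) := by
    intro t ht
    have hgt : g t = Classical.choose (conv t ht) := dif_pos ht
    rw [hgt]
    exact Classical.choose_spec (conv t ht)
  have hg0 : g 0 = x := by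
    have hcx : Filter.Tendsto (fun k => γ (φ k) (0:ℝ)) Filter.atTop (@nhds X σ x) := by
      have hx : (fun k => γ (φ k) (0:ℝ)) = fun _ => x := funext fun k => (hends (φ k)).1
      rw [hx]
      exact @tendsto_const_nhds X σ ℕ x Filter.atTop
    exact @tendsto_nhds_unique X ℕ σ hH _ Filter.atTop _ _ _ (hg 0 h0m) hcx
  have hg1 : g 1 = y := by
    have hcy : Filter.Tendsto (fun k => γ (φ k) (1:ℝ)) Filter.atTop (@nhds X σ y) := by
      have hy : (fun k => γ (φ k) (1:ℝ)) = fun _ => y := funext fun k => (hends (φ k)).2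
      rw [hy]
      exact @tendsto_const_nhds X σ ℕ y Filter.atTop
    exact @tendsto_nhds_unique X ℕ σ hH _ Filter.atTop _ _ _ (hg 1 h1m) hcy
  have hgH : ∀ s ∈ Set.Icc (0:ℝ) 1, ∀ t ∈ Set.Icc (0:ℝ) 1,
      dist (g s) (g t) ≤ K * Real.sqrt |s - t| := by
    intro s hs t ht
    refine (hdlsc _ _ _ _ (hg s hs) (hg t ht)).trans
      (lim_le (fun k => dist_nonneg) fun k => ?_)
    exact hold (φ k) s hs t ht
  refine ⟨φ, g, hφ, hg0, hg1, hgH, (fun t ht => hg t ht), ?_⟩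
  -- lower semicontinuity of the action
  unfold kineticAction
  refine iSup_le fun n => iSup_le fun tt => iSup_le fun hmono => iSup_le fun hmem => ?_
  have hΔ0 : ∀ i : Fin n, 0 ≤ tt i.succ - tt i.castSucc :=
    fun i => sub_nonneg.2 (hmono (Fin.castSucc_le_succ i))
  have habs1 : ∀ i : Fin n, Real.sqrt |tt i.succ - tt i.castSucc| ≤ 1 := by
    intro i
    refine Real.sqrt_le_one.mpr (abs_le.mpr ⟨?_, ?_⟩)
    · linarith [(hmem i.succ).1, (hmem i.castSucc).2]
    · linarith [(hmem i.succ).2, (hmem i.castSucc).1]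
  have hdgK : ∀ i : Fin n, dist (g (tt i.succ)) (g (tt i.castSucc)) ≤ K := by
    intro i
    refine (hgH _ (hmem _) _ (hmem _)).trans ?_
    calc K * Real.sqrt |tt i.succ - tt i.castSucc| ≤ K * 1 :=
          mul_le_mul_of_nonneg_left (habs1 i) hK0
      _ = K := mul_one K
  have hdgle : ∀ i : Fin n, dist (g (tt i.succ)) (g (tt i.castSucc)) ≤
      Filter.liminf (fun k => dist (γ (φ k) (tt i.succ)) (γ (φ k) (tt i.castSucc)))
        Filter.atTop :=
    fun i => hdlsc _ _ _ _ (hg _ (hmem _)) (hg _ (hmem _))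
  have hSle : ∀ k, ENNReal.ofReal ((1/2:ℝ) * ∑ i : Fin n,
      dist (γ (φ k) (tt i.succ)) (γ (φ k) (tt i.castSucc)) ^ 2 / (tt i.succ - tt i.castSucc))
      ≤ kineticAction (γ (φ k)) := by
    intro k
    unfold kineticAction
    exact le_iSup_of_le n (le_iSup_of_le tt (le_iSup_of_le hmono (le_iSup_of_le hmem le_rfl)))
  have hSC : ∀ k, (1/2:ℝ) * ∑ i : Fin n,
      dist (γ (φ k) (tt i.succ)) (γ (φ k) (tt i.castSucc)) ^ 2 / (tt i.succ - tt i.castSucc)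
      ≤ C :=
    fun k => (ENNReal.ofReal_le_ofReal_iff hC).1 ((hSle k).trans (hact (φ k)))
  have hreal := sum_liminf_aux (fun i => tt i.succ - tt i.castSucc) hΔ0
    (fun i => dist (g (tt i.succ)) (g (tt i.castSucc)))
    (fun k i => dist (γ (φ k) (tt i.succ)) (γ (φ k) (tt i.castSucc))) K hK0
    (fun i => dist_nonneg) hdgK (fun k i => dist_nonneg) hdgle C hSC
  have hSnn : ∀ k, 0 ≤ (1/2:ℝ) * ∑ i : Fin n,
      dist (γ (φ k) (tt i.succ)) (γ (φ k) (tt i.castSucc)) ^ 2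
        / (tt i.succ - tt i.castSucc) :=
    fun k => mul_nonneg (by norm_num)
      (Finset.sum_nonneg fun i _ => div_nonneg (sq_nonneg _) (hΔ0 i))
  refine le_trans ?_ (Filter.liminf_le_liminf (Filter.Eventually.of_forall hSle))
  refine (Filter.le_liminf_iff (by isBoundedDefault) (by isBoundedDefault)).mpr ?_
  intro b hb
  have hbtop : b ≠ ⊤ := (hb.trans ENNReal.ofReal_lt_top).ne
  have hble : b.toReal < (1/2:ℝ) * ∑ i : Fin n,
      dist (g (tt i.succ)) (g (tt i.castSucc)) ^ 2 / (tt i.succ - tt i.castSucc) :=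
    (ENNReal.lt_ofReal_iff_toReal_lt hbtop).1 hb
  have hev : ∀ᶠ k in Filter.atTop, b.toReal < (1/2:ℝ) * ∑ i : Fin n,
      dist (γ (φ k) (tt i.succ)) (γ (φ k) (tt i.castSucc)) ^ 2
        / (tt i.succ - tt i.castSucc) :=
    Filter.eventually_lt_of_lt_liminf (lt_of_lt_of_le hble hreal)
      (Filter.isBoundedUnder_of ⟨0, hSnn⟩)
  refine hev.mono fun k hk => ?_
  calc b = ENNReal.ofReal b.toReal := (ENNReal.ofReal_toReal hbtop).symm
    _ < ENNReal.ofReal _ :=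
        (ENNReal.ofReal_lt_ofReal_iff (lt_of_le_of_lt ENNReal.toReal_nonneg hk)).2 hk
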